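/- Let α₁ and α₂ be two Pauli assignments (possibly with different numbers of qubits) of the same hypergram (V,H,G). Let a₁ be a classical assignment and let S = {h ∈ H : sgn_{a₁}(h) = sgn_{α₁}(h)} be the set of hyperedges satisfied by a₁ for α₁. Then there exists a classical assignment a₂ such that {h ∈ H : sgn_{a₂}(h) = sgn_{α₂}(h)} = S. -/

import Mathlib

open scoped Classical
open Matrix

noncomputable section

/-- The space of `n`-qubit operators, realized as matrices indexed by
`Fin n → Fin 2` (the `n`-fold tensor-product index). -/
abbrev QMat (n : ℕ) := Matrix (Fin n → Fin 2) (Fin n → Fin 2) ℂ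

/-- The four Pauli matrices `I, X, Y, Z`. -/
def pauliMat : Fin 4 → Matrix (Fin 2) (Fin 2) ℂ
  | ⟨0, _⟩ => 1
  | ⟨1, _⟩ => !![0, 1; 1, 0]
  | ⟨2, _⟩ => !![0, -Complex.I; Complex.I, 0]
  | ⟨3, _⟩ => !![1, 0; 0, -1]

/-- The `n`-fold Kronecker (tensor) product `G₁ ⊗ ⋯ ⊗ Gₙ` of the Pauli matrices
selected by `g : Fin n → Fin 4`, as a matrix indexed by `Fin n → Fin 2`. -/
def nPauli {n : ℕ} (g : Fin n → Fin 4) : QMat n :=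
  Matrix.of fun r c => ∏ k, pauliMat (g k) (r k) (c k)

/-- `M` is an `n`-qubit Pauli observable. -/
def IsPauliObs (n : ℕ) (M : QMat n) : Prop := ∃ g : Fin n → Fin 4, M = nPauli g

/-- `I^⊗n`, the `n`-fold tensor product of the identity. -/
def idN (n : ℕ) : QMat n := nPauli (fun _ => ⟨0, by omega⟩)

/-- Product of `f` over a finite set of naturals, taken in increasing order
(well-defined without commutativity; agrees with the unordered product when the
factors pairwise commute). -/
def natFinsetProd {M : Type*} [Monoid M] (s : Finset ℕ) (f : ℕ → M) : M :=
  ((s.sort (· ≤ ·)).map f).prod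

/-- `(V,H,G)` is a hypergram: `V` a nonempty finite vertex set, `H` a set of
nonempty hyperedges covering `V`, `G` a set of 2-element edges on `V` forming a
simple reduced graph, no edge of `G` being contained in a hyperedge of `H`. -/
def IsHypergram (V : Finset ℕ) (H G : Finset (Finset ℕ)) : Prop :=
  V.Nonempty ∧
  (∀ h ∈ H, h ⊆ V ∧ h.Nonempty) ∧
  (∀ v ∈ V, ∃ h ∈ H, v ∈ h) ∧
  (∀ e ∈ G, e ⊆ V ∧ e.card = 2) ∧
  (∀ v ∈ V, ∃ e ∈ G, v ∈ e) ∧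
  (∀ v ∈ V, ∀ w ∈ V,
    (∀ u ∈ V, (({v, u} : Finset ℕ) ∈ G ↔ ({w, u} : Finset ℕ) ∈ G)) → v = w) ∧
  (∀ e ∈ G, ∀ h ∈ H, ¬ e ⊆ h)

/-- `α` is an `n`-qubit Pauli assignment of the hypergram `(V,H,G)`. -/
def IsPauliAssignment (V : Finset ℕ) (H G : Finset (Finset ℕ)) (n : ℕ)
    (α : ℕ → QMat n) : Prop :=
  (∀ v ∈ V, IsPauliObs n (α v)) ∧
  (∀ v ∈ V, α v ≠ idN n) ∧
  (∀ v₁ ∈ V, ∀ v₂ ∈ V, α v₁ = α v₂ → v₁ = v₂) ∧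
  (∀ v₁ ∈ V, ∀ v₂ ∈ V, v₁ ≠ v₂ →
    (α v₁ * α v₂ = -(α v₂ * α v₁) ↔ ({v₁, v₂} : Finset ℕ) ∈ G)) ∧
  (∀ h ∈ H, natFinsetProd h α = idN n ∨ natFinsetProd h α = -(idN n))

/-- The sign `sgn_α(h) ∈ {−1,1}` of a hyperedge `h`: `∏_{v∈h} α(v) = sgn_α(h)·I^⊗n`. -/
def quantumSgn {n : ℕ} (α : ℕ → QMat n) (h : Finset ℕ) : ℤ :=
  if natFinsetProd h α = idN n then 1 else -1

/-- The sign `sgn_a(h) = ∏_{v∈h} a(v)` of a hyperedge for a classical assignment. -/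
def classicalSgn (a : ℕ → ℤ) (h : Finset ℕ) : ℤ := ∏ v ∈ h, a v

/-- The contextuality degree of a Pauli assignment: the minimum over classical
assignments `a : V → {−1,1}` of the number of hyperedges whose signs differ. -/
def contextualityDegree {n : ℕ} (H : Finset (Finset ℕ)) (α : ℕ → QMat n) : ℕ :=
  sInf { d : ℕ | ∃ a : ℕ → ℤ, (∀ v, a v = 1 ∨ a v = -1) ∧
    d = (H.filter (fun h => quantumSgn α h ≠ classicalSgn a h)).card }

/-- The context (incidence) matrix of a hypergram over 𝔽₂. -/
def contextMatrix (V : Finset ℕ) (H : Finset (Finset ℕ)) :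
    Matrix {h // h ∈ H} {v // v ∈ V} (ZMod 2) :=
  Matrix.of fun h v => if v.1 ∈ h.1 then 1 else 0

/-- The anticommutation (adjacency) matrix of a hypergram over 𝔽₂. -/
def anticommMatrix (V : Finset ℕ) (G : Finset (Finset ℕ)) :
    Matrix {v // v ∈ V} {v // v ∈ V} (ZMod 2) :=
  Matrix.of fun i j => if ({i.1, j.1} : Finset ℕ) ∈ G then 1 else 0

/-- The standard symplectic form on `𝔽₂^{2n}`:
`⟨x,y⟩ = Σ_{k=1}^{n} (x_{2k−1} y_{2k} + x_{2k} y_{2k−1})`. -/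
def sympForm (n : ℕ) (x y : Fin (2 * n) → ZMod 2) : ZMod 2 :=
  ∑ k : Fin n,
    (x ⟨2 * k.1, by have := k.2; omega⟩ * y ⟨2 * k.1 + 1, by have := k.2; omega⟩ +
     x ⟨2 * k.1 + 1, by have := k.2; omega⟩ * y ⟨2 * k.1, by have := k.2; omega⟩)

/-- The single-qubit encoding `ψ(I)=(0,0), ψ(X)=(0,1), ψ(Y)=(1,1), ψ(Z)=(1,0)`. -/
def psi4 : Fin 4 → (ZMod 2) × (ZMod 2)
  | ⟨0, _⟩ => (0, 0)
  | ⟨1, _⟩ => (0, 1)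
  | ⟨2, _⟩ => (1, 1)
  | ⟨3, _⟩ => (1, 0)

/-- The encoding `ψ` of an `n`-qubit Pauli observable (given by its tensor
factors `g`) as a vector of `𝔽₂^{2n}`, concatenating the per-factor encodings. -/
def psiVec {n : ℕ} (g : Fin n → Fin 4) : Fin (2 * n) → ZMod 2 := fun idx =>
  if idx.1 % 2 = 0 then (psi4 (g ⟨idx.1 / 2, by have := idx.2; omega⟩)).1
  else (psi4 (g ⟨idx.1 / 2, by have := idx.2; omega⟩)).2

/-- All pairs of elements of `S` commute. -/
def PairComm {n : ℕ} (S : Finset (QMat n)) : Prop := ∀ a ∈ S, ∀ b ∈ S, a * b = b * a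

/-- The (well-defined) product of a finite set of pairwise commuting matrices. -/
def commProd {n : ℕ} (S : Finset (QMat n)) (h : PairComm S) : QMat n :=
  S.noncommProd id (fun a ha b hb _ => h a ha b hb)

/-- Pairwise commutation is inherited by subsets. -/
def pairCommOfSubset {n : ℕ} {S T : Finset (QMat n)} (hST : S ⊆ T) (h : PairComm T) :
    PairComm S := fun a ha b hb => h a (hST ha) b (hST hb)

/-- `Q` (pairwise commuting) is independent: no nonempty subset has product `±I^⊗n`. -/
def IsIndep {n : ℕ} (Q : Finset (QMat n)) (hQ : PairComm Q) : Prop :=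
  ∀ S : Finset (QMat n), ∀ (hS : S ⊆ Q), S.Nonempty →
    commProd S (pairCommOfSubset hS hQ) ≠ idN n ∧
    commProd S (pairCommOfSubset hS hQ) ≠ -(idN n)

/-- The vertex set `{1, …, 15}`. -/
def V15 : Finset ℕ := Finset.Icc 1 15

/-- The 15 lines of the doily. -/
def doilyLines : Finset (Finset ℕ) :=
  { {1,2,3}, {1,8,9}, {1,10,11}, {2,4,6}, {2,5,7}, {3,12,15}, {3,13,14},
    {4,8,12}, {4,10,14}, {5,8,13}, {5,10,15}, {6,9,15}, {6,11,13},
    {7,9,14}, {7,11,12} }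

/-- The 10 lines of the two-spread `H_{2s}`. -/
def twoSpreadLines : Finset (Finset ℕ) :=
  { {1,2,3}, {1,10,11}, {2,4,6}, {3,13,14}, {4,8,12}, {5,8,13}, {5,10,15},
    {6,9,15}, {7,9,14}, {7,11,12} }

/-- The anticommutation graph `G_d = G_{2s}`: pairs of distinct vertices not on a
common doily line. -/
def doilyG : Finset (Finset ℕ) :=
  (V15.powersetCard 2).filter (fun e => ∀ h ∈ doilyLines, ¬ e ⊆ h)



/-! ### Auxiliary lemmas for the proof -/

section Aux

lemma pauliMat_sq (a : Fin 4) : pauliMat a * pauliMat a = 1 := by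
  fin_cases a <;>
    simp [pauliMat, Matrix.mul_fin_two, Matrix.one_fin_two, Complex.I_mul_I]

lemma pauliMat_comm_or_anticomm (a b : Fin 4) :
    pauliMat a * pauliMat b = pauliMat b * pauliMat a ∨
    pauliMat a * pauliMat b = -(pauliMat b * pauliMat a) := by
  fin_cases a <;> fin_cases b <;>
    first
      | (left; simp [pauliMat, Matrix.mul_fin_two, Matrix.one_fin_two]; done)
      | (right; simp [pauliMat, Matrix.mul_fin_two, Matrix.one_fin_two])

lemma nPauli_mul_apply {n : ℕ} (g g' : Fin n → Fin 4) (r c : Fin n → Fin 2) :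
    (nPauli g * nPauli g') r c = ∏ k, (pauliMat (g k) * pauliMat (g' k)) (r k) (c k) := by
  have : ∀ k, (pauliMat (g k) * pauliMat (g' k)) (r k) (c k)
      = ∑ j : Fin 2, pauliMat (g k) (r k) j * pauliMat (g' k) j (c k) := fun k =>
    Matrix.mul_apply
  rw [Finset.prod_congr rfl fun k _ => this k, Finset.prod_univ_sum]
  rw [Matrix.mul_apply]
  rw [Fintype.piFinset_univ]
  refine Finset.sum_congr rfl fun x _ => ?_
  simp [nPauli, Finset.prod_mul_distrib]

lemma prod_entry_one {n : ℕ} (r c : Fin n → Fin 2) :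
    (∏ k, (1 : Matrix (Fin 2) (Fin 2) ℂ) (r k) (c k)) = (1 : QMat n) r c := by
  by_cases hrc : r = c
  · subst hrc; simp [Matrix.one_apply]
  · rw [Matrix.one_apply_ne hrc]
    obtain ⟨k, hk⟩ := Function.ne_iff.mp hrc
    exact Finset.prod_eq_zero (Finset.mem_univ k) (Matrix.one_apply_ne hk)

lemma idN_eq_one (n : ℕ) : idN n = 1 := by
  ext r c
  have h0 : pauliMat ⟨0, by omega⟩ = 1 := rfl
  rw [idN, nPauli]
  simp only [Matrix.of_apply, h0]
  exact prod_entry_one r c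

lemma nPauli_sq {n : ℕ} (g : Fin n → Fin 4) : nPauli g * nPauli g = 1 := by
  ext r c
  rw [nPauli_mul_apply]
  rw [← prod_entry_one r c]
  exact Finset.prod_congr rfl fun k _ => by rw [pauliMat_sq]

lemma nPauli_comm_or_anticomm {n : ℕ} (g g' : Fin n → Fin 4) :
    nPauli g * nPauli g' = nPauli g' * nPauli g ∨
    nPauli g * nPauli g' = -(nPauli g' * nPauli g) := by
  have hch : ∀ k, ∃ e : ℂ, (e = 1 ∨ e = -1) ∧
      pauliMat (g k) * pauliMat (g' k) = e • (pauliMat (g' k) * pauliMat (g k)) := by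
    intro k
    rcases pauliMat_comm_or_anticomm (g k) (g' k) with h | h
    · exact ⟨1, Or.inl rfl, by simpa using h⟩
    · exact ⟨-1, Or.inr rfl, by simpa using h⟩
  choose e he heq using hch
  have hsq : ∀ k, e k * e k = 1 := fun k => by rcases he k with h | h <;> simp [h]
  have hprod : (∏ k, e k) = 1 ∨ (∏ k, e k) = -1 := by
    rw [← mul_self_eq_one_iff, ← Finset.prod_mul_distrib]
    exact Finset.prod_eq_one fun k _ => hsq k
  have key : nPauli g * nPauli g' = (∏ k, e k) • (nPauli g' * nPauli g) := by
    ext r c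
    rw [nPauli_mul_apply, Matrix.smul_apply, nPauli_mul_apply, smul_eq_mul,
      ← Finset.prod_mul_distrib]
    exact Finset.prod_congr rfl fun k _ => by rw [heq k, Matrix.smul_apply, smul_eq_mul]
  rcases hprod with h | h
  · left; rw [key, h, one_smul]
  · right; rw [key, h, neg_one_smul]

/-- The Kronecker product of two multi-qubit matrices. -/
def kron {m n : ℕ} (M : QMat m) (N : QMat n) : QMat (m + n) :=
  Matrix.of fun r c =>
    M (fun i => r (Fin.castAdd n i)) (fun i => c (Fin.castAdd n i)) *
    N (fun i => r (Fin.natAdd m i)) (fun i => c (Fin.natAdd m i))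

lemma kron_mul {m n : ℕ} (M M' : QMat m) (N N' : QMat n) :
    kron M N * kron M' N' = kron (M * M') (N * N') := by
  ext r c
  rw [Matrix.mul_apply]
  rw [← Equiv.sum_comp (Fin.appendEquiv m n) (fun x => kron M N r x * kron M' N' x c)]
  rw [Fintype.sum_prod_type]
  have : ∀ (p : Fin m → Fin 2) (q : Fin n → Fin 2),
      kron M N r (Fin.appendEquiv m n (p, q)) * kron M' N' (Fin.appendEquiv m n (p, q)) c
      = (M (fun i => r (Fin.castAdd n i)) p * M' p (fun i => c (Fin.castAdd n i))) *
        (N (fun i => r (Fin.natAdd m i)) q * N' q (fun i => c (Fin.natAdd m i))) := by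
    intro p q
    have h1 : (fun i => Fin.appendEquiv m n (p, q) (Fin.castAdd n i)) = p := by
      funext i; simp [Fin.appendEquiv, Fin.append_left]
    have h2 : (fun i => Fin.appendEquiv m n (p, q) (Fin.natAdd m i)) = q := by
      funext i; simp [Fin.appendEquiv, Fin.append_right]
    simp only [kron, Matrix.of_apply, h1, h2]
    ring
  simp only [this]
  rw [← Finset.sum_mul_sum]
  simp [kron, Matrix.mul_apply]

lemma kron_one_one {m n : ℕ} : kron (1 : QMat m) (1 : QMat n) = 1 := by
  ext r c
  by_cases hrc : r = c
  · subst hrc; simp [kron, Matrix.one_apply]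
  · have : (fun i => r (Fin.castAdd n i)) ≠ (fun i => c (Fin.castAdd n i)) ∨
        (fun i => r (Fin.natAdd m i)) ≠ (fun i => c (Fin.natAdd m i)) := by
      by_contra hcon
      push_neg at hcon
      apply hrc
      funext i
      refine Fin.addCases (fun j => ?_) (fun j => ?_) i
      · exact congrFun hcon.1 j
      · exact congrFun hcon.2 j
    rw [Matrix.one_apply_ne hrc]
    rcases this with h | h
    · simp [kron, Matrix.one_apply_ne h]
    · simp [kron, Matrix.one_apply_ne h]

lemma kron_neg_neg {m n : ℕ} (M : QMat m) (N : QMat n) :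
    kron (-M) (-N) = kron M N := by
  ext r c; simp [kron]

lemma kron_smul_smul {m n : ℕ} (a b : ℂ) (M : QMat m) (N : QMat n) :
    kron (a • M) (b • N) = (a * b) • kron M N := by
  ext r c; simp [kron]; ring

lemma prod_eq_one_of_even_counts {M : Type*} [Monoid M] (f : ℕ → M) :
    ∀ (N : ℕ) (L : List ℕ), L.length = N →
    (∀ v ∈ L, ∀ w ∈ L, f v * f w = f w * f v) →
    (∀ v ∈ L, f v * f v = 1) →
    (∀ v, 2 ∣ L.count v) →
    (L.map f).prod = 1 := by
  intro N
  induction N using Nat.strong_induction_on with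
  | _ N ih =>
    intro L hlen hcomm hsq hcount
    match L, hlen with
    | [], _ => simp
    | a :: t, hlen =>
      have hat : a ∈ t := by
        by_contra hat
        have := hcount a
        rw [List.count_cons_self, List.count_eq_zero_of_not_mem hat] at this
        omega
      have hperm : List.Perm (a :: t) (a :: a :: t.erase a) :=
        List.Perm.cons a (List.perm_cons_erase hat)
      have hpw : ((a :: t).map f).Pairwise Commute := by
        rw [List.pairwise_map]
        exact List.pairwise_of_forall_mem_list fun v hv w hw => hcomm v hv w hw
      have hprodeq : ((a :: t).map f).prod = ((a :: a :: t.erase a).map f).prod :=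
        List.Perm.prod_eq' (hperm.map f) hpw
      rw [hprodeq]
      simp only [List.map_cons, List.prod_cons, ← mul_assoc]
      rw [hsq a (by simp), one_mul]
      have hsub : ∀ v ∈ t.erase a, v ∈ a :: t := fun v hv =>
        List.mem_cons_of_mem a (List.mem_of_mem_erase hv)
      have hlen' : (t.erase a).length = N - 2 := by
        have := List.length_erase_of_mem hat
        simp at hlen
        omega
      have hNpos : 2 ≤ N := by
        have := List.length_erase_of_mem hat
        have ht : 1 ≤ t.length := List.length_pos_iff.mpr (List.ne_nil_of_mem hat)
        simp at hlen
        omega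
      refine ih (N - 2) (by omega) (t.erase a) hlen'
        (fun v hv w hw => hcomm v (hsub v hv) w (hsub w hw))
        (fun v hv => hsq v (hsub v hv)) (fun v => ?_)
      have hc := hcount v
      have hcc : (a :: t).count v = (a :: a :: t.erase a).count v := hperm.count_eq v
      rw [hcc] at hc
      simp only [List.count_cons] at hc
      by_cases hne : a = v <;> simp [hne] at hc ⊢ <;> omega

lemma prod_map_kron {n₁ n₂ : ℕ} (α₁ : ℕ → QMat n₁) (α₂ : ℕ → QMat n₂) (l : List ℕ) :
    (l.map (fun v => kron (α₁ v) (α₂ v))).prod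
      = kron ((l.map α₁).prod) ((l.map α₂).prod) := by
  induction l with
  | nil => simp [kron_one_one]
  | cons a t ih => simp only [List.map_cons, List.prod_cons, ih, kron_mul]

lemma list_smul_one_prod {N : ℕ} {β' : Type*} (l : List β') (c : β' → ℂ) :
    (l.map (fun x => c x • (1 : QMat N))).prod = (l.map c).prod • 1 := by
  induction l with
  | nil => simp
  | cons a t ih =>
    simp only [List.map_cons, List.prod_cons, ih, smul_mul_smul_comm, one_mul]

lemma prod_flatMap_eq {M : Type*} [Monoid M] {β' : Type*} (f : β' → List M) (l : List β') :
    (l.flatMap f).prod = (l.map (fun b => (f b).prod)).prod := by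
  induction l with
  | nil => simp
  | cons a t ih => simp [List.prod_append, ih]

/-- sign encoding of `ZMod 2` into `{1, -1} ⊆ ℤ` -/
def zsgn (x : ZMod 2) : ℤ := if x = 0 then 1 else -1

lemma zsgn_add : ∀ x y : ZMod 2, zsgn (x + y) = zsgn x * zsgn y := by decide

lemma zsgn_eq_one_iff : ∀ x : ZMod 2, zsgn x = 1 ↔ x = 0 := by decide

lemma prod_zsgn {β' : Type*} {s : Finset β'} (y : β' → ZMod 2) :
    (∏ v ∈ s, zsgn (y v)) = zsgn (∑ v ∈ s, y v) := by
  classical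
  induction s using Finset.induction_on with
  | empty => simp [zsgn]
  | insert a s hns ih =>
    rw [Finset.prod_insert hns, Finset.sum_insert hns, zsgn_add, ih]

lemma zsgn_vals (x : ZMod 2) : zsgn x = 1 ∨ zsgn x = -1 := by
  unfold zsgn; split <;> simp

lemma exists_factor {K : Type*} [Field K] {A B : Type*}
    [AddCommGroup A] [Module K A] [AddCommGroup B] [Module K B]
    (T : A →ₗ[K] B) (ψ : A →ₗ[K] K) (hker : LinearMap.ker T ≤ LinearMap.ker ψ) :
    ∃ φ : B →ₗ[K] K, ∀ z, φ (T z) = ψ z := by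
  let ψ' : (A ⧸ LinearMap.ker T) →ₗ[K] K := Submodule.liftQ _ ψ hker
  let e : (A ⧸ LinearMap.ker T) ≃ₗ[K] LinearMap.range T := LinearMap.quotKerEquivRange T
  let f : LinearMap.range T →ₗ[K] K := ψ'.comp (e.symm : LinearMap.range T →ₗ[K] _)
  obtain ⟨φ, hφ⟩ := LinearMap.exists_extend f
  refine ⟨φ, fun z => ?_⟩
  have h1 : φ (T z) = f ⟨T z, LinearMap.mem_range_self T z⟩ := by
    have := congrArg (fun (g : LinearMap.range T →ₗ[K] K) =>
      g ⟨T z, LinearMap.mem_range_self T z⟩) hφ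
    simpa using this
  rw [h1]
  have h2 : e (Submodule.Quotient.mk z) = ⟨T z, LinearMap.mem_range_self T z⟩ :=
    Subtype.ext (LinearMap.quotKerEquivRange_apply_mk T z)
  have h3 : e.symm ⟨T z, LinearMap.mem_range_self T z⟩ = Submodule.Quotient.mk z := by
    rw [← h2, LinearEquiv.symm_apply_apply]
  show ψ' (e.symm ⟨T z, LinearMap.mem_range_self T z⟩) = ψ z
  rw [h3]
  exact Submodule.liftQ_apply _ ψ z

/-- The incidence map of the hypergram, as a linear map over 𝔽₂. -/
def incT (V : Finset ℕ) (H : Finset (Finset ℕ)) :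
    ({h // h ∈ H} → ZMod 2) →ₗ[ZMod 2] ({v // v ∈ V} → ZMod 2) where
  toFun z := fun u => ∑ h : {h // h ∈ H}, z h * (if u.1 ∈ h.1 then 1 else 0)
  map_add' z₁ z₂ := by
    funext u
    simp only [Pi.add_apply, add_mul]
    rw [Finset.sum_add_distrib]
  map_smul' c z := by
    funext u
    simp only [Pi.smul_apply, smul_eq_mul, RingHom.id_apply, Finset.mul_sum, mul_assoc]

lemma incT_apply (V : Finset ℕ) (H : Finset (Finset ℕ)) (z : {h // h ∈ H} → ZMod 2)
    (u : {v // v ∈ V}) :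
    incT V H z u = ∑ h : {h // h ∈ H}, z h * (if u.1 ∈ h.1 then 1 else 0) := rfl

/-- Dot product with a fixed vector of signs, as a linear functional over 𝔽₂. -/
def epsL (H : Finset (Finset ℕ)) (ε : Finset ℕ → ZMod 2) :
    ({h // h ∈ H} → ZMod 2) →ₗ[ZMod 2] ZMod 2 where
  toFun z := ∑ h : {h // h ∈ H}, z h * ε h.1
  map_add' z₁ z₂ := by
    simp only [Pi.add_apply, add_mul]
    rw [Finset.sum_add_distrib]
  map_smul' c z := by
    simp only [Pi.smul_apply, smul_eq_mul, RingHom.id_apply, Finset.mul_sum, mul_assoc]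

lemma epsL_apply (H : Finset (Finset ℕ)) (ε : Finset ℕ → ZMod 2)
    (z : {h // h ∈ H} → ZMod 2) :
    epsL H ε z = ∑ h : {h // h ∈ H}, z h * ε h.1 := rfl

lemma zmod2_cases : ∀ x : ZMod 2, x = 0 ∨ x = 1 := by decide

lemma exists_classical_correction (V : Finset ℕ) (H : Finset (Finset ℕ))
    (hVsub : ∀ h ∈ H, h ⊆ V)
    (ε : Finset ℕ → ZMod 2)
    (hrel : ∀ A : Finset {h // h ∈ H},
      (∀ v ∈ V, 2 ∣ (A.filter (fun h => v ∈ h.1)).card) → ∑ h ∈ A, ε h.1 = 0) :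
    ∃ y : ℕ → ZMod 2, ∀ h ∈ H, ∑ v ∈ h, y v = ε h := by
  classical
  haveI : Fact (Nat.Prime 2) := ⟨Nat.prime_two⟩
  have h01 := zmod2_cases
  have hker : LinearMap.ker (incT V H) ≤ LinearMap.ker (epsL H ε) := by
    intro z hz
    rw [LinearMap.mem_ker] at hz ⊢
    set A := Finset.univ.filter (fun h : {h // h ∈ H} => z h = 1) with hAdef
    have sumA : ∀ x : {h // h ∈ H} → ZMod 2,
        (∑ h : {h // h ∈ H}, z h * x h) = ∑ h ∈ A, x h := by
      intro x
      refine Eq.trans (Finset.sum_congr rfl fun h _ => ?_) (Finset.sum_filter _ _).symm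
      rcases h01 (z h) with h0 | h1
      · rw [h0]; simp
      · rw [h1]; simp
    have hψ : epsL H ε z = ∑ h ∈ A, ε h.1 := by
      rw [epsL_apply]; exact sumA _
    rw [hψ]
    apply hrel A
    intro v hv
    have h0 := congrFun hz ⟨v, hv⟩
    rw [incT_apply] at h0
    rw [sumA (fun h => if v ∈ h.1 then 1 else 0)] at h0
    rw [Finset.sum_boole] at h0
    simp only [Pi.zero_apply] at h0
    exact (ZMod.natCast_eq_zero_iff _ 2).mp h0
  obtain ⟨φ, hφ⟩ := exists_factor (incT V H) (epsL H ε) hker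
  set y : ℕ → ZMod 2 := fun v => if hv : v ∈ V then φ (Pi.single ⟨v, hv⟩ 1) else 0 with hydef
  refine ⟨y, fun h hh => ?_⟩
  have h1 : incT V H (Pi.single ⟨h, hh⟩ 1)
      = fun u : {v // v ∈ V} => if u.1 ∈ h then 1 else 0 := by
    funext u
    rw [incT_apply]
    rw [Finset.sum_eq_single (⟨h, hh⟩ : {h // h ∈ H})]
    · simp
    · intro b _ hb
      rw [Pi.single_eq_of_ne hb, zero_mul]
    · intro hmem; exact absurd (Finset.mem_univ _) hmem
  have h2 : epsL H ε (Pi.single ⟨h, hh⟩ 1) = ε h := by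
    rw [epsL_apply]
    rw [Finset.sum_eq_single (⟨h, hh⟩ : {h // h ∈ H})]
    · simp
    · intro b _ hb
      rw [Pi.single_eq_of_ne hb, zero_mul]
    · intro hmem; exact absurd (Finset.mem_univ _) hmem
  have h3 : (fun u : {v // v ∈ V} => if u.1 ∈ h then (1 : ZMod 2) else 0)
      = ∑ u : {v // v ∈ V}, (if u.1 ∈ h then (1 : ZMod 2) else 0) • Pi.single u (1 : ZMod 2) := by
    funext w
    rw [Finset.sum_apply]
    rw [Finset.sum_eq_single w]
    · simp
    · intro b _ hb
      rw [Pi.smul_apply, Pi.single_eq_of_ne (Ne.symm hb), smul_zero]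
    · intro hmem; exact absurd (Finset.mem_univ _) hmem
  have h4 : φ (fun u : {v // v ∈ V} => if u.1 ∈ h then (1 : ZMod 2) else 0)
      = ∑ v ∈ h, y v := by
    rw [h3, map_sum]
    have step : ∀ u : {v // v ∈ V},
        φ ((if u.1 ∈ h then (1 : ZMod 2) else 0) • Pi.single u (1 : ZMod 2))
        = if u.1 ∈ h then y u.1 else 0 := by
      intro u
      rw [_root_.map_smul, smul_eq_mul]
      by_cases hu : u.1 ∈ h
      · rw [if_pos hu, if_pos hu, one_mul, hydef]
        simp only [dif_pos u.2]
      · rw [if_neg hu, if_neg hu, zero_mul]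
    rw [Finset.sum_congr rfl fun u _ => step u]
    rw [Finset.sum_coe_sort V (fun v => if v ∈ h then y v else 0)]
    rw [← Finset.sum_filter]
    congr 1
    ext v
    simp only [Finset.mem_filter]
    exact ⟨fun hv => hv.2, fun hv => ⟨hVsub h hh hv, hv⟩⟩
  rw [← h4, ← h1, hφ, h2]

lemma natFinsetProd_scal {n : ℕ} (α : ℕ → QMat n) (h : Finset ℕ)
    (hor : natFinsetProd h α = idN n ∨ natFinsetProd h α = -(idN n)) :
    natFinsetProd h α = ((quantumSgn α h : ℤ) : ℂ) • 1 := by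
  have hne : ¬ (-(idN n) = idN n) := by
    rw [idN_eq_one]
    intro hcon
    have := congrFun (congrFun hcon (fun _ => 0)) (fun _ => 0)
    simp only [Matrix.neg_apply, Matrix.one_apply_eq] at this
    norm_num at this
  unfold quantumSgn
  rcases hor with hpos | hneg
  · rw [if_pos hpos, hpos, idN_eq_one]; simp
  · rw [if_neg (by rw [hneg]; exact hne), hneg, idN_eq_one]
    simp

lemma quantumSgn_vals {n : ℕ} (α : ℕ → QMat n) (h : Finset ℕ) :
    quantumSgn α h = 1 ∨ quantumSgn α h = -1 := by
  unfold quantumSgn; split <;> simp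

lemma core_prod (V : Finset ℕ) (H : Finset (Finset ℕ)) {N : ℕ} (β : ℕ → QMat N)
    (hVsub : ∀ h ∈ H, h ⊆ V)
    (hβsq : ∀ v ∈ V, β v * β v = 1)
    (hβcomm : ∀ v ∈ V, ∀ w ∈ V, β v * β w = β w * β v)
    (s : Finset ℕ → ℤ)
    (hscal : ∀ h ∈ H, natFinsetProd h β = ((s h : ℤ) : ℂ) • 1)
    (A : Finset {h // h ∈ H})
    (hA : ∀ v ∈ V, 2 ∣ (A.filter (fun h => v ∈ h.1)).card) :
    (∏ h ∈ A, s h.1) = 1 := by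
  classical
  set l := A.toList with hl
  set L : List ℕ := l.flatMap (fun h => h.1.sort (· ≤ ·)) with hL
  have hmemL : ∀ v ∈ L, v ∈ V := by
    intro v hv
    rw [hL, List.mem_flatMap] at hv
    obtain ⟨h, hhl, hv⟩ := hv
    exact hVsub h.1 h.2 ((Finset.mem_sort _).mp hv)
  have hcount : ∀ v, 2 ∣ L.count v := by
    intro v
    by_cases hvV : v ∈ V
    · rw [hL, List.count_flatMap]
      have e1 : (l.map (List.count v ∘ fun h : {h // h ∈ H} => h.1.sort (· ≤ ·)))
          = l.map (fun h => if v ∈ h.1 then 1 else 0) := by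
        refine List.map_congr_left fun h hh => ?_
        by_cases hvh : v ∈ h.1
        · simp only [Function.comp_apply]
          rw [List.count_eq_one_of_mem (Finset.sort_nodup _ _) ((Finset.mem_sort _).mpr hvh),
            if_pos hvh]
        · simp only [Function.comp_apply]
          rw [List.count_eq_zero_of_not_mem (fun hc => hvh ((Finset.mem_sort _).mp hc)),
            if_neg hvh]
      rw [e1]
      rw [hl, Finset.sum_map_toList A (fun h => if v ∈ h.1 then 1 else 0)]
      rw [← Finset.card_filter]
      exact hA v hvV
    · rw [List.count_eq_zero_of_not_mem (fun hc => hvV (hmemL v hc))]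
      exact dvd_zero 2
  have hprod1 : (l.map (fun h => natFinsetProd h.1 β)).prod = (L.map β).prod := by
    rw [hL, List.map_flatMap]
    rw [prod_flatMap_eq]
    rfl
  have hprod2 : (L.map β).prod = 1 :=
    prod_eq_one_of_even_counts β L.length L rfl
      (fun v hv w hw => hβcomm v (hmemL v hv) w (hmemL w hw))
      (fun v hv => hβsq v (hmemL v hv)) hcount
  have hprod3 : (l.map (fun h => natFinsetProd h.1 β)).prod
      = ((∏ h ∈ A, s h.1 : ℤ) : ℂ) • 1 := by
    have e2 : l.map (fun h => natFinsetProd h.1 β)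
        = l.map (fun h => ((s h.1 : ℤ) : ℂ) • (1 : QMat N)) :=
      List.map_congr_left fun h hh => hscal h.1 h.2
    rw [e2, list_smul_one_prod]
    congr 1
    have e3 : (l.map fun h : {h // h ∈ H} => ((s h.1 : ℤ) : ℂ))
        = (l.map fun h : {h // h ∈ H} => s h.1).map (Int.cast : ℤ → ℂ) := by
      rw [List.map_map]; rfl
    rw [e3, ← Int.cast_list_prod]
    rw [hl, Finset.prod_map_toList A (fun h => s h.1)]
  have key : ((∏ h ∈ A, s h.1 : ℤ) : ℂ) • (1 : QMat N) = 1 := by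
    rw [← hprod3, hprod1, hprod2]
  have hent := congrFun (congrFun key (fun _ => 0)) (fun _ => 0)
  simp only [Matrix.smul_apply, Matrix.one_apply_eq, smul_eq_mul, mul_one] at hent
  exact_mod_cast hent

end Aux

/-- A classical assignment can be transferred between two Pauli
assignments of the same hypergram, keeping the same set of satisfied hyperedges. -/
theorem classical_assignment_transfer
    (V : Finset ℕ) (H G : Finset (Finset ℕ)) (hgram : IsHypergram V H G)
    {n₁ n₂ : ℕ} (α₁ : ℕ → QMat n₁) (α₂ : ℕ → QMat n₂)
    (h₁ : IsPauliAssignment V H G n₁ α₁) (h₂ : IsPauliAssignment V H G n₂ α₂)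
    (a₁ : ℕ → ℤ) (ha₁ : ∀ v, a₁ v = 1 ∨ a₁ v = -1) :
    ∃ a₂ : ℕ → ℤ, (∀ v, a₂ v = 1 ∨ a₂ v = -1) ∧
      ∀ h ∈ H, (classicalSgn a₂ h = quantumSgn α₂ h ↔
                 classicalSgn a₁ h = quantumSgn α₁ h) := by
  classical
  have hVsub : ∀ h ∈ H, h ⊆ V := fun h hh => (hgram.2.1 h hh).1
  obtain ⟨hobs1, hne1, hinj1, hac1, hpr1⟩ := h₁
  obtain ⟨hobs2, hne2, hinj2, hac2, hpr2⟩ := h₂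
  -- the tensored assignment
  set β : ℕ → QMat (n₁ + n₂) := fun v => kron (α₁ v) (α₂ v) with hβdef
  have hsq1 : ∀ v ∈ V, α₁ v * α₁ v = 1 := by
    intro v hv; obtain ⟨g, hg⟩ := hobs1 v hv; rw [hg]; exact nPauli_sq g
  have hsq2 : ∀ v ∈ V, α₂ v * α₂ v = 1 := by
    intro v hv; obtain ⟨g, hg⟩ := hobs2 v hv; rw [hg]; exact nPauli_sq g
  have hβsq : ∀ v ∈ V, β v * β v = 1 := by
    intro v hv
    rw [hβdef]
    simp only []
    rw [kron_mul, hsq1 v hv, hsq2 v hv, kron_one_one]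
  have hβcomm : ∀ v ∈ V, ∀ w ∈ V, β v * β w = β w * β v := by
    intro v hv w hw
    by_cases hvw : v = w
    · rw [hvw]
    · rw [hβdef]
      simp only []
      rw [kron_mul, kron_mul]
      by_cases hG : ({v, w} : Finset ℕ) ∈ G
      · have ha1 : α₁ v * α₁ w = -(α₁ w * α₁ v) := (hac1 v hv w hw hvw).mpr hG
        have ha2 : α₂ v * α₂ w = -(α₂ w * α₂ v) := (hac2 v hv w hw hvw).mpr hG
        rw [ha1, ha2, kron_neg_neg]
      · have hc1 : α₁ v * α₁ w = α₁ w * α₁ v := by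
          obtain ⟨g, hg⟩ := hobs1 v hv
          obtain ⟨g', hg'⟩ := hobs1 w hw
          rcases nPauli_comm_or_anticomm g g' with hcc | hcc
          · rw [hg, hg']; exact hcc
          · exact absurd ((hac1 v hv w hw hvw).mp (by rw [hg, hg']; exact hcc)) (fun hx => hG hx)
        have hc2 : α₂ v * α₂ w = α₂ w * α₂ v := by
          obtain ⟨g, hg⟩ := hobs2 v hv
          obtain ⟨g', hg'⟩ := hobs2 w hw
          rcases nPauli_comm_or_anticomm g g' with hcc | hcc
          · rw [hg, hg']; exact hcc
          · exact absurd ((hac2 v hv w hw hvw).mp (by rw [hg, hg']; exact hcc)) (fun hx => hG hx)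
        rw [hc1, hc2]
  set s : Finset ℕ → ℤ := fun h => quantumSgn α₁ h * quantumSgn α₂ h with hsdef
  have hs : ∀ h, s h = 1 ∨ s h = -1 := by
    intro h
    rw [hsdef]
    rcases quantumSgn_vals α₁ h with e1 | e1 <;> rcases quantumSgn_vals α₂ h with e2 | e2 <;>
      simp [e1, e2]
  have hscal : ∀ h ∈ H, natFinsetProd h β = ((s h : ℤ) : ℂ) • 1 := by
    intro h hh
    have e1 := natFinsetProd_scal α₁ h (hpr1 h hh)
    have e2 := natFinsetProd_scal α₂ h (hpr2 h hh)
    have ek : natFinsetProd h β = kron (natFinsetProd h α₁) (natFinsetProd h α₂) := by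
      rw [hβdef]
      exact prod_map_kron α₁ α₂ _
    rw [ek, e1, e2, kron_smul_smul, kron_one_one, hsdef]
    push_cast
    ring_nf
  set ε : Finset ℕ → ZMod 2 := fun h => if s h = 1 then 0 else 1 with hεdef
  have hzs : ∀ h, zsgn (ε h) = s h := by
    intro h
    rcases hs h with e | e <;> rw [hεdef] <;> simp [e, zsgn]
  have hrel : ∀ A : Finset {h // h ∈ H},
      (∀ v ∈ V, 2 ∣ (A.filter (fun h => v ∈ h.1)).card) → ∑ h ∈ A, ε h.1 = 0 := by
    intro A hA
    have hcore := core_prod V H β hVsub hβsq hβcomm s hscal A hA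
    have : zsgn (∑ h ∈ A, ε h.1) = 1 := by
      rw [← prod_zsgn]
      rw [Finset.prod_congr rfl fun h _ => hzs h.1]
      exact hcore
    exact (zsgn_eq_one_iff _).mp this
  obtain ⟨y, hy⟩ := exists_classical_correction V H hVsub ε hrel
  refine ⟨fun v => a₁ v * zsgn (y v), fun v => ?_, fun h hh => ?_⟩
  · rcases ha₁ v with e | e <;> rcases zsgn_vals (y v) with e' | e' <;> simp [e, e']
  · have hb : (∏ v ∈ h, zsgn (y v)) = s h := by
      rw [prod_zsgn, hy h hh, hzs h]
    have hcs : classicalSgn (fun v => a₁ v * zsgn (y v)) h = classicalSgn a₁ h * s h := by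
      unfold classicalSgn
      rw [Finset.prod_mul_distrib, hb]
    have hseq : s h = quantumSgn α₁ h * quantumSgn α₂ h := by rw [hsdef]
    rw [hcs, hseq]
    rcases quantumSgn_vals α₁ h with e1 | e1 <;> rcases quantumSgn_vals α₂ h with e2 | e2 <;>
      rw [e1, e2] <;> ring_nf <;> omega


end
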